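/- Weighted envy-freeness bound for DRF-MT allocations: suppose agent j's allocation x_j satisfies Σ_{r∈g_l^j} x_{jr} = y_j · w_{j*} · d_{jl}/d_{j*} for every demand group g_l^j ∈ G_j, and x_{jr} = 0 for r ∉ ∪_l g_l^j, where w_{j*}/d_{j*} = min_l w_{jl}/d_{jl}. Then agent i's Leontief utility of agent j's allocation rescaled by the weight ratios, u_i(x̃) where x̃_r = x_{jr}·w_{il}/w_{jl} for r ∈ g_l^i, is at most y_j · w_{i*}/d_{i*}. -/

import Mathlib

/-- Weighted envy-freeness bound: if agent `j`'s allocation exactly meets its DRF-MT allocation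
constraints (group sum `= yj * (wj*/dj*) * djl` for each meta-type) and is supported on `j`'s
demand groups, then agent `i`'s Leontief utility of `j`'s allocation rescaled by the weight
ratios is at most `yj * (wi*/di*)`. -/
theorem envy_bound {L R : Type} [Fintype L] [Nonempty L] [Fintype R] [DecidableEq R]
    (Ω : L → Finset R) (hΩ : ∀ l l', l ≠ l' → Disjoint (Ω l) (Ω l'))
    (gi gj : L → Finset R) (hgi : ∀ l, gi l ⊆ Ω l) (hgj : ∀ l, gj l ⊆ Ω l)
    (di dj wi wj : L → ℝ)
    (hdi : ∀ l, 0 < di l) (hdj : ∀ l, 0 < dj l)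
    (hwi : ∀ l, 0 < wi l) (hwj : ∀ l, 0 < wj l)
    (xj : R → ℝ) (hx0 : ∀ r, 0 ≤ xj r)
    (yj : ℝ)
    -- agent j's allocation constraints are met with equality
    (heq : ∀ l, ∑ r ∈ gj l, xj r =
      yj * (Finset.univ.inf' Finset.univ_nonempty fun l' => wj l' / dj l') * dj l)
    -- agent j's allocation is supported on its demand groups
    (hsupp : ∀ r : R, (∀ l, r ∉ gj l) → xj r = 0) :
    (Finset.univ.inf' Finset.univ_nonempty fun l =>
        (1 / di l) * ∑ r ∈ gi l, xj r * (wi l / wj l)) ≤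
      yj * (Finset.univ.inf' Finset.univ_nonempty fun l => wi l / di l) := by
  set mj : ℝ := Finset.univ.inf' Finset.univ_nonempty fun l' => wj l' / dj l' with hmj
  -- mj > 0
  have hmjpos : 0 < mj := by
    rw [hmj, Finset.lt_inf'_iff]
    intro l _
    exact div_pos (hwj l) (hdj l)
  -- yj ≥ 0
  have hyj : 0 ≤ yj := by
    obtain ⟨l0⟩ := ‹Nonempty L›
    have h := heq l0
    have hs : 0 ≤ ∑ r ∈ gj l0, xj r := Finset.sum_nonneg fun r _ => hx0 r
    nlinarith [mul_pos hmjpos (hdj l0)]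
  -- pick the minimizer l* of wi/di
  obtain ⟨ls, -, hls⟩ := Finset.exists_mem_eq_inf' (Finset.univ_nonempty (α := L))
    (fun l => wi l / di l)
  rw [hls]
  -- LHS ≤ value at l*
  refine le_trans (Finset.inf'_le _ (Finset.mem_univ ls)) ?_
  -- sum over gi l* equals sum over gi l* ∩ gj l*
  have hzero : ∀ r ∈ gi ls \ gj ls, xj r = 0 := by
    intro r hr
    rcases Finset.mem_sdiff.mp hr with ⟨hri, hrj⟩
    apply hsupp
    intro l hl
    rcases eq_or_ne l ls with rfl | hne
    · exact hrj hl
    · simpa using (hΩ l ls hne).le_bot (Finset.mem_inter.mpr ⟨hgj l hl, hgi ls hri⟩)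
  have hsum : ∑ r ∈ gi ls, xj r ≤ ∑ r ∈ gj ls, xj r := by
    have h1 : ∑ r ∈ gi ls, xj r = ∑ r ∈ gi ls ∩ gj ls, xj r := by
      refine (Finset.sum_subset (Finset.inter_subset_left) ?_).symm
      intro r hr hr'
      exact hzero r (Finset.mem_sdiff.mpr ⟨hr, fun h => hr' (Finset.mem_inter.mpr ⟨hr, h⟩)⟩)
    rw [h1]
    exact Finset.sum_le_sum_of_subset_of_nonneg Finset.inter_subset_right
      fun r _ _ => hx0 r
  have hmjle : mj ≤ wj ls / dj ls := Finset.inf'_le _ (Finset.mem_univ ls)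
  have hwpos := hwi ls
  have hwjpos := hwj ls
  have hdipos := hdi ls
  have hdjpos := hdj ls
  have key : yj * mj * dj ls ≤ yj * (wj ls / dj ls) * dj ls := by
    have := mul_le_mul_of_nonneg_left hmjle hyj
    nlinarith
  have h2 : ∑ r ∈ gi ls, xj r ≤ yj * (wj ls / dj ls) * dj ls :=
    (hsum.trans (le_of_eq (heq ls))).trans key
  calc (1 / di ls) * (∑ r ∈ gi ls, xj r * (wi ls / wj ls))
      = (1 / di ls) * ((∑ r ∈ gi ls, xj r) * (wi ls / wj ls)) := by
        rw [Finset.sum_mul]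
    _ ≤ (1 / di ls) * ((yj * (wj ls / dj ls) * dj ls) * (wi ls / wj ls)) := by
        apply mul_le_mul_of_nonneg_left _ (by positivity)
        exact mul_le_mul_of_nonneg_right h2 (by positivity)
    _ = yj * (wi ls / di ls) := by
        field_simp
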